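/- There exists ε > 0 such that for every sufficiently large natural number n there exists x : Fin n → Bool such that for every k with 1 ≤ k ≤ n − 1, the Hamming distance between x and its cyclic shift by k is at least ε·n. -/

import Mathlib

open Finset Nat

section Aux

lemma exists_step' (n k : ℕ) (hn : 0 < n) (i : ℕ) (hi : i < n) :
    ∃ t : ℕ, (i % Nat.gcd n k + t * k) % n = i := by
  haveI : NeZero n := ⟨hn.ne'⟩
  set g := Nat.gcd n k with hgdef
  have hg : 0 < g := Nat.gcd_pos_of_pos_left _ hn
  set r := i % g with hrdef
  have hd : (g : ℤ) ∣ ((i : ℤ) - r) := by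
    refine ⟨(i / g : ℕ), ?_⟩
    have hnat := Nat.div_add_mod i g
    have hcast : (g : ℤ) * ((i / g : ℕ) : ℤ) + ((i % g : ℕ) : ℤ) = (i : ℤ) := by
      exact_mod_cast hnat
    simp only [hrdef]
    linarith
  obtain ⟨s, hs⟩ := hd
  set t : ℕ := ((s * Nat.gcdB n k : ℤ) % n).toNat with htdef
  have htz : (t : ℤ) = (s * Nat.gcdB n k) % n := by
    rw [htdef, Int.toNat_of_nonneg (Int.emod_nonneg _ (by exact_mod_cast hn.ne'))]
  refine ⟨t, ?_⟩
  have hzm : ((r + t * k : ℕ) : ZMod n) = (i : ZMod n) := by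
    push_cast
    have ht : (t : ZMod n) = ((s * Nat.gcdB n k : ℤ) : ZMod n) := by
      have h1 : ((t : ℤ) : ZMod n) = ((s * Nat.gcdB n k : ℤ) : ZMod n) := by
        rw [htz, ZMod.intCast_mod]
      exact_mod_cast h1
    rw [ht]
    have hbez := Nat.gcd_eq_gcd_ab n k
    have hbez' : ((g : ℤ) : ZMod n) = ((n * Nat.gcdA n k + k * Nat.gcdB n k : ℤ) : ZMod n) := by
      exact_mod_cast congrArg (fun z : ℤ => (z : ZMod n)) hbez
    push_cast at hbez'
    rw [ZMod.natCast_self] at hbez'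
    have hg' : (g : ZMod n) = (k : ZMod n) * ((Nat.gcdB n k : ℤ) : ZMod n) := by
      simpa using hbez'
    have hs' : (i : ZMod n) - (r : ZMod n) = (s : ZMod n) * (g : ZMod n) := by
      have h2 := congrArg (fun z : ℤ => (z : ZMod n)) hs
      push_cast at h2
      rw [mul_comm] at h2
      simpa using h2
    push_cast
    linear_combination -hs' - (s : ZMod n) * hg'
  have hmod : (r + t * k) % n = i % n := (ZMod.natCast_eq_natCast_iff _ _ _).1 hzm
  rwa [Nat.mod_eq_of_lt hi] at hmod

lemma bool_xor_cancel' (a b c : Bool) (h : xor a b = xor a c) : b = c := by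
  cases a <;> simpa using h

lemma key_inj' {n : ℕ} (k : ℕ) (hn : 0 < n) (x₁ x₂ : Fin n → Bool)
    (h0 : ∀ i : Fin n, (i : ℕ) < Nat.gcd n k → x₁ i = x₂ i)
    (hy : ∀ i : Fin n, xor (x₁ i) (x₁ ⟨((i : ℕ) + k) % n, Nat.mod_lt _ hn⟩)
                     = xor (x₂ i) (x₂ ⟨((i : ℕ) + k) % n, Nat.mod_lt _ hn⟩)) :
    x₁ = x₂ := by
  have hg : 0 < Nat.gcd n k := Nat.gcd_pos_of_pos_left _ hn
  have hgn : Nat.gcd n k ≤ n := Nat.le_of_dvd hn (Nat.gcd_dvd_left _ _)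
  have main : ∀ t r, r < Nat.gcd n k →
      x₁ ⟨(r + t * k) % n, Nat.mod_lt _ hn⟩ = x₂ ⟨(r + t * k) % n, Nat.mod_lt _ hn⟩ := by
    intro t
    induction t with
    | zero =>
      intro r hr
      have : (r + 0 * k) % n = r := by
        simp [Nat.mod_eq_of_lt (lt_of_lt_of_le hr hgn)]
      have e : (⟨(r + 0 * k) % n, Nat.mod_lt _ hn⟩ : Fin n) = ⟨r, lt_of_lt_of_le hr hgn⟩ :=
        Fin.ext this
      rw [e]
      exact h0 _ hr
    | succ t ih =>
      intro r hr
      set i : Fin n := ⟨(r + t * k) % n, Nat.mod_lt _ hn⟩ with hidef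
      have h1 := hy i
      rw [ih r hr] at h1
      have h2 := bool_xor_cancel' _ _ _ h1
      have e : (⟨((i : ℕ) + k) % n, Nat.mod_lt _ hn⟩ : Fin n)
          = ⟨(r + (t + 1) * k) % n, Nat.mod_lt _ hn⟩ := by
        apply Fin.ext
        show ((r + t * k) % n + k) % n = (r + (t + 1) * k) % n
        rw [Nat.mod_add_mod]
        ring_nf
      rwa [e] at h2
  funext i
  obtain ⟨t, ht⟩ := exists_step' n k hn i i.2
  have := main t ((i : ℕ) % Nat.gcd n k) (Nat.mod_lt _ hg)
  have e : (⟨((i : ℕ) % Nat.gcd n k + t * k) % n, Nat.mod_lt _ hn⟩ : Fin n) = i := Fin.ext ht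
  rwa [e] at this



lemma card_light' (n m : ℕ) :
    (Finset.univ.filter
      (fun y : Fin n → Bool => (Finset.univ.filter (fun i => y i = true)).card < m)).card
      ≤ ∑ j ∈ Finset.range m, n.choose j := by
  classical
  have h := Finset.card_le_card_of_injOn
    (s := Finset.univ.filter
      (fun y : Fin n → Bool => (Finset.univ.filter (fun i => y i = true)).card < m))
    (t := (Finset.range m).biUnion (fun j => Finset.powersetCard j (Finset.univ : Finset (Fin n))))
    (f := fun y : Fin n → Bool => Finset.univ.filter (fun i => y i = true))
    ?_ ?_
  · refine h.trans ?_
    refine (Finset.card_biUnion_le).trans ?_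
    apply Finset.sum_le_sum
    intro j _
    rw [Finset.card_powersetCard, Finset.card_univ, Fintype.card_fin]
  · intro y hy
    simp only [Finset.mem_coe, Finset.mem_filter] at hy
    simp only [Finset.mem_coe, Finset.mem_biUnion, Finset.mem_range, Finset.mem_powersetCard]
    exact ⟨_, hy.2, Finset.subset_univ _, rfl⟩
  · intro y₁ _ y₂ _ hf
    funext i
    have hf' : Finset.univ.filter (fun i => y₁ i = true)
        = Finset.univ.filter (fun i => y₂ i = true) := hf
    have : (i ∈ Finset.univ.filter (fun i => y₁ i = true))
        = (i ∈ Finset.univ.filter (fun i => y₂ i = true)) := by rw [hf']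
    simp only [Finset.mem_filter, Finset.mem_univ, true_and] at this
    cases h1 : y₁ i <;> cases h2 : y₂ i <;> simp_all

lemma choose_mono_below' (n : ℕ) : ∀ m, m ≤ n / 2 → ∀ j, j ≤ m → n.choose j ≤ n.choose m := by
  intro m
  induction m with
  | zero => intro _ j hj; simp [Nat.le_zero.mp hj]
  | succ m ih =>
    intro hm j hj
    rcases Nat.lt_or_ge j (m+1) with h | h
    · exact (ih (by omega) j (by omega)).trans
        (Nat.choose_le_succ_of_lt_half_left (by omega))
    · have : j = m + 1 := by omega
      subst this; rfl

lemma pow_self_le_three_pow_mul_factorial' (m : ℕ) : m ^ m ≤ 3 ^ m * m ! := by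
  induction m with
  | zero => simp
  | succ m ih =>
    have key : (m + 1) ^ m ≤ 3 * m ^ m := by
      rcases Nat.eq_zero_or_pos m with rfl | hm
      · simp
      · have hreal : ((m : ℝ) + 1) ^ m ≤ 3 * (m : ℝ) ^ m := by
          have hm' : (0 : ℝ) < m := by exact_mod_cast hm
          have h1 : ((m : ℝ) + 1) ^ m = (m : ℝ) ^ m * (1 + 1 / m) ^ m := by
            rw [← mul_pow]; congr 1; field_simp
          have h2 : (1 + 1 / (m : ℝ)) ^ m ≤ Real.exp (1 / m) ^ m := by
            apply pow_le_pow_left₀ (by positivity)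
            have := Real.add_one_le_exp (1 / (m : ℝ))
            linarith
          have h3 : Real.exp (1 / (m : ℝ)) ^ m = Real.exp 1 := by
            rw [← Real.exp_nat_mul]
            congr 1
            field_simp
          have h4 : Real.exp 1 ≤ 3 := by
            have := Real.exp_one_lt_d9
            linarith
          have hpos : (0:ℝ) ≤ (m:ℝ)^m := by positivity
          have h5 : (1 + 1/(m:ℝ))^m ≤ 3 := by
            calc (1 + 1/(m:ℝ))^m ≤ Real.exp (1/(m:ℝ)) ^ m := h2
              _ = Real.exp 1 := h3
              _ ≤ 3 := h4
          calc ((m:ℝ)+1) ^ m = (m:ℝ)^m * (1 + 1/(m:ℝ))^m := h1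
            _ ≤ (m:ℝ)^m * 3 := mul_le_mul_of_nonneg_left h5 hpos
            _ = 3 * (m:ℝ)^m := by ring
        have : ((m+1:ℕ):ℝ) ^ m ≤ ((3 * m ^ m : ℕ) : ℝ) := by push_cast; exact hreal
        exact_mod_cast this
    calc (m+1)^(m+1) = (m+1)^m * (m+1) := by ring
      _ ≤ 3 * m^m * (m+1) := Nat.mul_le_mul_right _ key
      _ ≤ 3 * (3^m * m !) * (m+1) := by
          exact Nat.mul_le_mul_right _ (Nat.mul_le_mul_left _ ih)
      _ = 3^(m+1) * (m+1)! := by rw [Nat.factorial_succ]; ring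

lemma choose_le_1024_pow' {n m : ℕ} (hm : 0 < m) (hn : n ≤ 200 * m) :
    n.choose m ≤ 1024 ^ m := by
  have h1 : m ! * n.choose m ≤ n ^ m := by
    rw [← Nat.descFactorial_eq_factorial_mul_choose]
    exact Nat.descFactorial_le_pow _ _
  have h2 : m ^ m * n.choose m ≤ m ^ m * 600 ^ m := by
    calc m ^ m * n.choose m ≤ (3 ^ m * m !) * n.choose m :=
          Nat.mul_le_mul_right _ (pow_self_le_three_pow_mul_factorial' m)
      _ = 3 ^ m * (m ! * n.choose m) := by ring
      _ ≤ 3 ^ m * n ^ m := Nat.mul_le_mul_left _ h1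
      _ ≤ 3 ^ m * (200 * m) ^ m := Nat.mul_le_mul_left _ (Nat.pow_le_pow_left hn m)
      _ = m ^ m * 600 ^ m := by rw [mul_pow, ← mul_assoc, ← mul_pow]; ring_nf
  have h3 : n.choose m ≤ 600 ^ m :=
    Nat.le_of_mul_le_mul_left h2 (pow_pos hm m)
  exact h3.trans (Nat.pow_le_pow_left (by norm_num) m)

lemma sixteen_sq_lt' {q : ℕ} (hq : 12 ≤ q) : 16 * q ^ 2 < 2 ^ q := by
  induction q, hq using Nat.le_induction with
  | base => norm_num
  | succ q hq ih =>
    have h : 16 * (q+1)^2 ≤ 32 * q^2 := by nlinarith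
    calc 16 * (q+1)^2 ≤ 2 * (16 * q^2) := by omega
      _ < 2 * 2^q := by omega
      _ = 2^(q+1) := by ring

end Aux

/-- There exists `ε > 0` such that for every sufficiently large `n` there is a bit
string `x : Fin n → Bool` whose Hamming distance to each of its nontrivial cyclic
shifts (by `k` positions, `1 ≤ k ≤ n − 1`) is at least `ε·n`. -/
theorem exists_cyclically_asymmetric_string :
    ∃ ε : ℝ, 0 < ε ∧ ∃ N : ℕ, ∀ n : ℕ, N ≤ n →
      ∃ x : Fin n → Bool, ∀ k : ℕ, 1 ≤ k → k ≤ n - 1 →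
        ε * n ≤
          (hammingDist x (fun i => x ⟨((i : ℕ) + k) % n, Nat.mod_lt _ i.pos⟩) : ℝ) := by
  classical
  refine ⟨1/200, by norm_num, 1200, ?_⟩
  intro n hn
  have hn0 : 0 < n := by omega
  set m := n / 100 with hmdef
  have hm0 : 0 < m := by omega
  set sh : ℕ → (Fin n → Bool) → (Fin n → Bool) :=
    fun k x i => x ⟨((i : ℕ) + k) % n, Nat.mod_lt _ i.pos⟩ with hshdef
  set Bad : Finset (Fin n → Bool) :=
    (Finset.Icc 1 (n-1)).biUnion
      (fun k => Finset.univ.filter (fun x => hammingDist x (sh k x) < m)) with hBaddef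
  -- the light set
  set Light : Finset (Fin n → Bool) :=
    Finset.univ.filter
      (fun y : Fin n → Bool => (Finset.univ.filter (fun i => y i = true)).card < m)
      with hLightdef
  have hLight : Light.card ≤ m * 2 ^ (10 * m) := by
    refine (card_light' n m).trans ?_
    have hbd : ∀ j ∈ Finset.range m, n.choose j ≤ 2 ^ (10 * m) := by
      intro j hj
      have h1 : n.choose j ≤ n.choose m :=
        choose_mono_below' n m (by omega) j (le_of_lt (Finset.mem_range.mp hj))
      have h2 : n.choose m ≤ 1024 ^ m := choose_le_1024_pow' hm0 (by omega)
      have h3 : (1024 : ℕ) ^ m = 2 ^ (10 * m) := by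
        rw [show (1024 : ℕ) = 2 ^ 10 by norm_num, ← pow_mul]
      omega
    calc ∑ j ∈ Finset.range m, n.choose j ≤ (Finset.range m).card • 2 ^ (10 * m) :=
          Finset.sum_le_card_nsmul _ _ _ hbd
      _ = m * 2 ^ (10 * m) := by rw [Finset.card_range, smul_eq_mul]
  -- per-shift bound
  have hperk : ∀ k ∈ Finset.Icc 1 (n-1),
      (Finset.univ.filter (fun x => hammingDist x (sh k x) < m)).card
        ≤ 2 ^ (n / 2) * (m * 2 ^ (10 * m)) := by
    intro k hk
    rw [Finset.mem_Icc] at hk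
    have hkn : k < n := by omega
    have hgle : Nat.gcd n k ≤ n / 2 := by
      have hdvd : Nat.gcd n k ∣ n := Nat.gcd_dvd_left _ _
      have hglt : Nat.gcd n k < n := by
        have := Nat.le_of_dvd (by omega) (Nat.gcd_dvd_right n k)
        omega
      obtain ⟨c, hc⟩ := hdvd
      have hc2 : 2 ≤ c := by
        rcases Nat.lt_or_ge c 2 with h | h
        · interval_cases c <;> omega
        · exact h
      rw [Nat.le_div_iff_mul_le (by norm_num)]
      calc Nat.gcd n k * 2 ≤ Nat.gcd n k * c := Nat.mul_le_mul_left _ hc2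
        _ = n := hc.symm
    have hinj := Finset.card_le_card_of_injOn
      (s := Finset.univ.filter (fun x => hammingDist x (sh k x) < m))
      (t := (Finset.univ : Finset (Fin (n / 2) → Bool)) ×ˢ Light)
      (f := fun x => (fun j : Fin (n / 2) => x ⟨(j : ℕ), lt_of_lt_of_le j.2 (Nat.div_le_self n 2)⟩,
                      fun i : Fin n => xor (x i) (sh k x i)))
      ?_ ?_
    · refine hinj.trans ?_
      rw [Finset.card_product, Finset.card_univ]
      have : Fintype.card (Fin (n / 2) → Bool) = 2 ^ (n / 2) := by simp
      rw [this]
      exact Nat.mul_le_mul_left _ hLight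
    · -- maps to
      intro x hx
      rw [Finset.mem_coe, Finset.mem_filter] at hx
      rw [Finset.mem_coe, Finset.mem_product]
      refine ⟨Finset.mem_univ _, ?_⟩
      rw [hLightdef, Finset.mem_filter]
      refine ⟨Finset.mem_univ _, ?_⟩
      have heq : (Finset.univ.filter (fun i => xor (x i) (sh k x i) = true))
          = (Finset.univ.filter (fun i => x i ≠ sh k x i)) := by
        apply Finset.filter_congr
        intro i _
        cases h1 : x i <;> cases h2 : sh k x i <;> simp [h1, h2]
      have hdef : hammingDist x (sh k x)
          = (Finset.univ.filter (fun i => x i ≠ sh k x i)).card := rfl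
      rw [heq]
      rw [← hdef]
      exact hx.2
    · -- injectivity
      intro x₁ h₁ x₂ h₂ hf
      have hfst := congrArg Prod.fst hf
      have hsnd := congrArg Prod.snd hf
      simp only at hfst hsnd
      apply key_inj' k hn0 x₁ x₂
      · intro i hi
        have hi2 : (i : ℕ) < n / 2 := lt_of_lt_of_le hi hgle
        have := congrFun hfst ⟨(i : ℕ), hi2⟩
        simpa using this
      · intro i
        have := congrFun hsnd i
        simpa using this
  -- total bound
  have hBadcard : Bad.card < 2 ^ n := by
    have h1 : Bad.card ≤ (n - 1) * (2 ^ (n / 2) * (m * 2 ^ (10 * m))) := by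
      refine (Finset.card_biUnion_le).trans ?_
      calc ∑ k ∈ Finset.Icc 1 (n-1),
            (Finset.univ.filter (fun x => hammingDist x (sh k x) < m)).card
          ≤ ∑ _k ∈ Finset.Icc 1 (n-1), 2 ^ (n / 2) * (m * 2 ^ (10 * m)) :=
            Finset.sum_le_sum hperk
        _ = (n - 1) * (2 ^ (n / 2) * (m * 2 ^ (10 * m))) := by
            rw [Finset.sum_const, smul_eq_mul, Nat.card_Icc]
            congr 1
    have h2 : (n - 1) * (2 ^ (n / 2) * (m * 2 ^ (10 * m))) < 2 ^ n := by
      have hb : 10 * m ≤ n / 10 := by omega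
      have h3 : (n - 1) * (2 ^ (n / 2) * (m * 2 ^ (10 * m)))
          ≤ (n * n) * 2 ^ (n / 2 + n / 10) := by
        rw [pow_add]
        calc (n - 1) * (2 ^ (n / 2) * (m * 2 ^ (10 * m)))
            ≤ n * (2 ^ (n / 2) * (n * 2 ^ (n / 10))) := by
              apply Nat.mul_le_mul (by omega)
              apply Nat.mul_le_mul_left
              apply Nat.mul_le_mul (by omega)
              exact Nat.pow_le_pow_right (by norm_num) hb
          _ = (n * n) * (2 ^ (n / 2) * 2 ^ (n / 10)) := by ring
      have hq : n * n < 2 ^ (n - n / 2 - n / 10) := by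
        have hq1 : 12 ≤ n / 3 := by omega
        have hq2 : n ≤ 4 * (n / 3) := by omega
        have hq3 : n * n ≤ 16 * (n / 3) ^ 2 := by nlinarith
        have hq4 : 16 * (n / 3) ^ 2 < 2 ^ (n / 3) := sixteen_sq_lt' hq1
        have hq5 : (2 : ℕ) ^ (n / 3) ≤ 2 ^ (n - n / 2 - n / 10) :=
          Nat.pow_le_pow_right (by norm_num) (by omega)
        omega
      have hsplit : 2 ^ (n - n / 2 - n / 10) * 2 ^ (n / 2 + n / 10) = 2 ^ n := by
        rw [← pow_add]
        congr 1
        omega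
      calc (n - 1) * (2 ^ (n / 2) * (m * 2 ^ (10 * m)))
          ≤ (n * n) * 2 ^ (n / 2 + n / 10) := h3
        _ < 2 ^ (n - n / 2 - n / 10) * 2 ^ (n / 2 + n / 10) := by
            have hp : 0 < 2 ^ (n / 2 + n / 10) := Nat.pow_pos (by norm_num)
            exact Nat.mul_lt_mul_of_lt_of_le hq (le_refl _) hp
        _ = 2 ^ n := hsplit
    omega
  -- pick a good x
  have hnotall : ¬ (Finset.univ ⊆ Bad) := by
    intro hsub
    have hle := Finset.card_le_card hsub
    have hcardF : (Finset.univ : Finset (Fin n → Bool)).card = 2 ^ n := by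
      rw [Finset.card_univ]
      simp
    omega
  obtain ⟨x, -, hx⟩ := Finset.not_subset.mp hnotall
  refine ⟨x, ?_⟩
  intro k hk1 hk2
  have hxk : ¬ (hammingDist x (sh k x) < m) := by
    intro hcon
    exact hx (Finset.mem_biUnion.mpr ⟨k, Finset.mem_Icc.mpr ⟨hk1, hk2⟩,
      Finset.mem_filter.mpr ⟨Finset.mem_univ _, hcon⟩⟩)
  have hdist : m ≤ hammingDist x (sh k x) := Nat.le_of_not_lt hxk
  have hrepl : hammingDist x (fun i => x ⟨((i : ℕ) + k) % n, Nat.mod_lt _ i.pos⟩)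
      = hammingDist x (sh k x) := rfl
  rw [hrepl]
  have hcast : ((1 : ℝ)/200) * n ≤ (m : ℝ) := by
    rw [div_mul_eq_mul_div, one_mul, div_le_iff₀ (by norm_num)]
    have : n ≤ m * 200 := by omega
    exact_mod_cast this
  refine hcast.trans ?_
  exact_mod_cast hdist
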